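/- Let A and B be n×n Hermitian positive semidefinite complex matrices. Then det(1 + A + B) ≤ det(1 + A) · det(1 + B), where 1 denotes the n×n identity matrix and all three determinants are nonnegative real numbers. -/

import Mathlib

open ComplexOrder in
/-- For psd `P`, `1 ≤ det (1 + P)` in the complex order. -/
private lemma aux_one_le_det_one_add {n : ℕ} (P : Matrix (Fin n) (Fin n) ℂ)
    (hP : P.PosSemidef) : (1 : ℂ) ≤ (1 + P).det := by
  have hs := hP.1.spectral_theorem
  set U := (hP.1.eigenvectorUnitary : Matrix (Fin n) (Fin n) ℂ) with hU
  have hU1 : U * star U = 1 := (Matrix.mem_unitaryGroup_iff).mp hP.1.eigenvectorUnitary.2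
  set d : Fin n → ℂ := RCLike.ofReal ∘ hP.1.eigenvalues with hd
  have hId : U * (1 + Matrix.diagonal d) * star U = 1 + P := by
    rw [Matrix.mul_add, Matrix.mul_one, Matrix.add_mul, hU1, hs, Unitary.conjStarAlgAut_apply]
  have hdet : (1 + P).det = (1 + Matrix.diagonal d).det := by
    rw [← hId, Matrix.det_mul, Matrix.det_mul, mul_comm, ← mul_assoc, ← Matrix.det_mul,
      (Matrix.mem_unitaryGroup_iff').mp hP.1.eigenvectorUnitary.2, Matrix.det_one, one_mul]
  have hdiag : (1 : Matrix (Fin n) (Fin n) ℂ) + Matrix.diagonal d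
      = Matrix.diagonal (fun i => 1 + d i) := by
    rw [← Matrix.diagonal_one, Matrix.diagonal_add]
  rw [hdet, hdiag, Matrix.det_diagonal]
  have : (∏ i, (1 + d i)) = (((∏ i, (1 + hP.1.eigenvalues i)) : ℝ) : ℂ) := by
    push_cast [hd]
    rfl
  rw [this]
  have h1 : (1 : ℝ) ≤ ∏ i, (1 + hP.1.eigenvalues i) := by
    calc (1 : ℝ) = ∏ _i : Fin n, (1 : ℝ) := by rw [Finset.prod_const_one]
      _ ≤ ∏ i, (1 + hP.1.eigenvalues i) := by
          apply Finset.prod_le_prod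
          · intro i _; norm_num
          · intro i _; linarith [hP.eigenvalues_nonneg i]
  exact_mod_cast h1

open ComplexOrder in
/-- For posdef `X` and psd `P`, `det X ≤ det (X + P)`. -/
private lemma aux_det_le_det_add {n : ℕ} (X P : Matrix (Fin n) (Fin n) ℂ)
    (hX : X.PosDef) (hP : P.PosSemidef) : X.det ≤ (X + P).det := by
  obtain ⟨R, hR, hRR⟩ : ∃ R : Matrix (Fin n) (Fin n) ℂ, R.PosSemidef ∧ R * R = X :=
    by open scoped MatrixOrder in exact ⟨CFC.sqrt X, Matrix.nonneg_iff_posSemidef.mp (CFC.sqrt_nonneg X), CFC.sqrt_mul_sqrt_self X hX.posSemidef.nonneg⟩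
  have hdetRR : R.det * R.det = X.det := by rw [← Matrix.det_mul, hRR]
  have hdetR : R.det ≠ 0 := by
    intro h
    exact hX.det_pos.ne' (by rw [← hdetRR, h, mul_zero])
  have hUnit : IsUnit R.det := isUnit_iff_ne_zero.mpr hdetR
  have hRi : R * R⁻¹ = 1 := Matrix.mul_nonsing_inv _ hUnit
  have hiR : R⁻¹ * R = 1 := Matrix.nonsing_inv_mul _ hUnit
  have hRinvH : (R⁻¹).conjTranspose = R⁻¹ := by
    rw [Matrix.conjTranspose_nonsing_inv, hR.1]
  have hM : (R⁻¹ * P * R⁻¹).PosSemidef := by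
    have := hP.conjTranspose_mul_mul_same R⁻¹
    rwa [hRinvH] at this
  have hId : R * (1 + R⁻¹ * P * R⁻¹) * R = X + P := by
    have h2 : R * (R⁻¹ * P * R⁻¹) * R = P := by
      calc R * (R⁻¹ * P * R⁻¹) * R = (R * R⁻¹) * P * (R⁻¹ * R) := by
            simp only [Matrix.mul_assoc]
        _ = P := by rw [hRi, hiR, one_mul, Matrix.mul_one]
    rw [Matrix.mul_add, Matrix.mul_one, Matrix.add_mul, hRR, h2]
  have hdet : (X + P).det = X.det * (1 + R⁻¹ * P * R⁻¹).det := by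
    rw [← hId, Matrix.det_mul, Matrix.det_mul, mul_comm, ← mul_assoc, hdetRR]
  rw [hdet]
  exact le_mul_of_one_le_right hX.det_pos.le (aux_one_le_det_one_add _ hM)

open ComplexOrder in
/-- For Hermitian positive semidefinite `A`, `B`,
`det (1 + A + B) ≤ det (1 + A) * det (1 + B)`, all three determinants being
nonnegative real numbers (nonnegativity in the complex order means exactly
being a nonnegative real). -/
theorem det_one_add_add_le
    {n : ℕ} (A B : Matrix (Fin n) (Fin n) ℂ)
    (hA : A.PosSemidef) (hB : B.PosSemidef) :
    0 ≤ (1 + A + B).det ∧ 0 ≤ (1 + A).det ∧ 0 ≤ (1 + B).det ∧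
      (1 + A + B).det ≤ (1 + A).det * (1 + B).det := by
  have hC : (1 + A).PosDef := Matrix.PosDef.one.add_posSemidef hA
  have h1B : (1 + B).PosDef := Matrix.PosDef.one.add_posSemidef hB
  have hCB : (1 + A + B).PosDef := hC.add_posSemidef hB
  refine ⟨hCB.det_pos.le, hC.det_pos.le, h1B.det_pos.le, ?_⟩
  set C := 1 + A with hCdef
  have hCunit : IsUnit C.det := hC.det_pos.ne'.isUnit
  have hCi : C * C⁻¹ = 1 := Matrix.mul_nonsing_inv _ hCunit
  have hiC : C⁻¹ * C = 1 := Matrix.nonsing_inv_mul _ hCunit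
  have hCinv : C⁻¹.PosDef := hC.inv
  -- the square root of B
  obtain ⟨W, hW, hWW⟩ : ∃ W : Matrix (Fin n) (Fin n) ℂ, W.PosSemidef ∧ W * W = B :=
    by open scoped MatrixOrder in exact ⟨CFC.sqrt B, Matrix.nonneg_iff_posSemidef.mp (CFC.sqrt_nonneg B), CFC.sqrt_mul_sqrt_self B hB.nonneg⟩
  -- det (C + B) = det C * det (1 + C⁻¹ * B)
  have key1 : (C + B).det = C.det * (1 + C⁻¹ * B).det := by
    have : C * (1 + C⁻¹ * B) = C + B := by
      rw [Matrix.mul_add, Matrix.mul_one, ← Matrix.mul_assoc, hCi, Matrix.one_mul]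
    rw [← this, Matrix.det_mul]
  -- det (1 + C⁻¹ * B) = det (1 + W * C⁻¹ * W)
  have key2 : (1 + C⁻¹ * B).det = (1 + W * (C⁻¹ * W)).det := by
    rw [← hWW, ← Matrix.mul_assoc, Matrix.det_one_add_mul_comm]
  -- 1 - C⁻¹ is psd
  have hsub : ((1 : Matrix (Fin n) (Fin n) ℂ) - C⁻¹).PosSemidef := by
    obtain ⟨T, hT, hTT⟩ : ∃ T : Matrix (Fin n) (Fin n) ℂ, T.PosSemidef ∧ T * T = C⁻¹ :=
      by open scoped MatrixOrder in exact ⟨CFC.sqrt C⁻¹, Matrix.nonneg_iff_posSemidef.mp (CFC.sqrt_nonneg C⁻¹), CFC.sqrt_mul_sqrt_self C⁻¹ hCinv.posSemidef.nonneg⟩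
    have hdetTT : T.det * T.det = C⁻¹.det := by rw [← Matrix.det_mul, hTT]
    have hdetT : T.det ≠ 0 := by
      intro h
      exact hCinv.det_pos.ne' (by rw [← hdetTT, h, mul_zero])
    have hTunit : IsUnit T.det := isUnit_iff_ne_zero.mpr hdetT
    have hTi : T * T⁻¹ = 1 := Matrix.mul_nonsing_inv _ hTunit
    have hiT : T⁻¹ * T = 1 := Matrix.nonsing_inv_mul _ hTunit
    have hCeq : C = T⁻¹ * T⁻¹ := by
      rw [← Matrix.mul_inv_rev, hTT, Matrix.nonsing_inv_nonsing_inv _ hCunit]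
    have hTCT : T * C * T = 1 := by
      rw [hCeq]
      calc T * (T⁻¹ * T⁻¹) * T = (T * T⁻¹) * (T⁻¹ * T) := by simp only [Matrix.mul_assoc]
        _ = 1 := by rw [hTi, hiT, Matrix.one_mul]
    have hTAT : T * A * T = 1 - C⁻¹ := by
      have : A = C - 1 := by rw [hCdef]; abel
      rw [this, Matrix.mul_sub, Matrix.sub_mul, Matrix.mul_one, hTCT, hTT]
    have := hA.conjTranspose_mul_mul_same T
    rwa [hT.1, hTAT] at this
  -- W * C⁻¹ * W is psd, W * (1 - C⁻¹) * W is psd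
  have hN : (W * (C⁻¹ * W)).PosSemidef := by
    have := hCinv.posSemidef.conjTranspose_mul_mul_same W
    rwa [hW.1, Matrix.mul_assoc] at this
  have hP' : (W * ((1 - C⁻¹) * W)).PosSemidef := by
    have := hsub.conjTranspose_mul_mul_same W
    rwa [hW.1, Matrix.mul_assoc] at this
  -- det (1 + W C⁻¹ W) ≤ det (1 + B)
  have key3 : (1 + W * (C⁻¹ * W)).det ≤ (1 + B).det := by
    have h1N : (1 + W * (C⁻¹ * W)).PosDef := Matrix.PosDef.one.add_posSemidef hN
    have := aux_det_le_det_add _ _ h1N hP'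
    have hsum : 1 + W * (C⁻¹ * W) + W * ((1 - C⁻¹) * W) = 1 + B := by
      rw [← hWW]; noncomm_ring
    rwa [hsum] at this
  calc (1 + A + B).det = (C + B).det := by rw [hCdef, add_assoc]
    _ = C.det * (1 + W * (C⁻¹ * W)).det := by rw [key1, key2]
    _ ≤ C.det * (1 + B).det := mul_le_mul_of_nonneg_left key3 hC.det_pos.le
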